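/- Let n ≥ 2 and let ω : ℚⁿ → S¹ be a group character (additive-to-multiplicative homomorphism) that is invariant under some finite-index subgroup Γ ≤ SL(n,ℤ), i.e., ω(g·x) = ω(x) for all g ∈ Γ and x ∈ ℚⁿ. Then ω is trivial: ω(x) = 1 for all x ∈ ℚⁿ. -/

import Mathlib

private lemma transvection_pow {n : ℕ} {i j : Fin n} (h : i ≠ j) (m : ℕ) :
    (Matrix.transvection i j (1 : ℤ)) ^ m = Matrix.transvection i j (m : ℤ) := by
  induction m with
  | zero => simp
  | succ k ih =>
    rw [pow_succ, ih, Matrix.transvection_mul_transvection_same i j h]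
    push_cast
    ring_nf

/-- Let `n ≥ 2` and let `ω : ℚⁿ → S¹` be a character of the additive group `ℚⁿ` that is
invariant under a finite-index subgroup `Γ ≤ SL(n, ℤ)`. Then `ω` is trivial. -/
theorem invariant_character_trivial (n : ℕ) (hn : 2 ≤ n)
    (Γ : Subgroup (Matrix.SpecialLinearGroup (Fin n) ℤ)) (hΓ : Γ.FiniteIndex)
    (ω : (Fin n → ℚ) → ℂ)
    (hmod : ∀ x : Fin n → ℚ, ‖ω x‖ = 1)
    (hhom : ∀ x y : Fin n → ℚ, ω (x + y) = ω x * ω y)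
    (hinv : ∀ g ∈ Γ, ∀ x : Fin n → ℚ,
      ω ((((g : Matrix.SpecialLinearGroup (Fin n) ℤ) : Matrix (Fin n) (Fin n) ℤ).map
          (fun z : ℤ => (z : ℚ))).mulVec x) = ω x) :
    ∀ x : Fin n → ℚ, ω x = 1 := by
  have hne : ∀ x, ω x ≠ 0 := by
    intro x hx
    have := hmod x
    rw [hx] at this
    simp at this
  have h0 : ω 0 = 1 := by
    have := hhom 0 0
    rw [add_zero] at this
    exact mul_left_cancel₀ (hne 0) (this.symm.trans (mul_one (ω 0)).symm)
  -- ω kills each Pi.single i q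
  have hsingle : ∀ (i : Fin n) (q : ℚ), ω (Pi.single i q) = 1 := by
    intro i q
    -- pick j ≠ i
    obtain ⟨j, hij⟩ : ∃ j : Fin n, i ≠ j := by
      haveI : Nontrivial (Fin n) := Fin.nontrivial_iff_two_le.mpr hn
      rcases exists_ne i with ⟨j, hj⟩
      exact ⟨j, hj.symm⟩
    -- transvection element of SL(n, ℤ)
    set g : Matrix.SpecialLinearGroup (Fin n) ℤ :=
      ⟨Matrix.transvection i j 1, Matrix.det_transvection_of_ne i j hij 1⟩ with hg
    obtain ⟨m, hm, -, hmem⟩ :=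
      Subgroup.exists_pow_mem_of_index_ne_zero hΓ.index_ne_zero g
    have hcoe : ((g ^ m : Matrix.SpecialLinearGroup (Fin n) ℤ) : Matrix (Fin n) (Fin n) ℤ)
        = Matrix.transvection i j (m : ℤ) := by
      rw [Matrix.SpecialLinearGroup.coe_pow]
      exact transvection_pow hij m
    -- the rational matrix
    have hmap : (Matrix.transvection i j (m : ℤ)).map (fun z : ℤ => (z : ℚ))
        = Matrix.transvection i j (m : ℚ) := by
      ext a b
      simp only [Matrix.map_apply, Matrix.transvection, Matrix.add_apply, Matrix.one_apply,
        Matrix.single, Matrix.of_apply]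
      split_ifs <;> simp
    have hmv : ∀ x : Fin n → ℚ,
        (Matrix.transvection i j (m : ℚ)).mulVec x = x + Pi.single i ((m : ℚ) * x j) := by
      intro x
      rw [Matrix.transvection, Matrix.add_mulVec, Matrix.one_mulVec,
        Matrix.single_mulVec]
      congr 1
    have key : ∀ x : Fin n → ℚ, ω (Pi.single i ((m : ℚ) * x j)) = 1 := by
      intro x
      have := hinv (g ^ m) hmem x
      rw [hcoe, hmap, hmv, add_comm, hhom] at this
      exact mul_right_cancel₀ (hne x) (by rw [this, one_mul])
    have hmQ : (m : ℚ) ≠ 0 := by exact_mod_cast hm.ne'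
    have := key (Pi.single j (q / m))
    rw [Pi.single_eq_same, mul_div_cancel₀ q hmQ] at this
    exact this
  -- decompose x into singles
  intro x
  have hx : x = ∑ i, Pi.single i (x i) := (Finset.univ_sum_single x).symm
  rw [hx]
  have : ∀ s : Finset (Fin n), ω (∑ i ∈ s, Pi.single i (x i)) = 1 := by
    intro s
    induction s using Finset.induction_on with
    | empty => simpa using h0
    | insert _ _ hni ih =>
      rw [Finset.sum_insert hni, hhom, hsingle, ih, one_mul]
  exact this Finset.univ
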